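/- The 3-dimensional H1 open boundary reduction map φ(x₁,x₂,x₃) = (−x₁, x₂ + 2c·x₂/(2x₁x₂+2x₂x₃−c), x₃ − c/(2x₂)) satisfies: (i) x₁² is invariant, and (ii) the function I(x₁,x₂,x₃) = (x₁+x₃)(2x₂(x₁−x₃)+c)/x₁ is anti-invariant, i.e. I∘φ = −I, wherever the map and I are defined (x₁ ≠ 0, x₂ ≠ 0, 2x₁x₂+2x₂x₃−c ≠ 0, and the image coordinates are nonzero as needed). -/

import Mathlib

/-- Invariants of the 3-dimensional H1 open boundary reduction map:
`x₁²` is invariant and `I = (x₁+x₃)(2x₂(x₁-x₃)+c)/x₁` is anti-invariant. -/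
theorem h1_3d_invariants {K : Type*} [Field K] (hchar : (2 : K) ≠ 0)
    (c x₁ x₂ x₃ : K) (h1 : x₁ ≠ 0) (h2 : x₂ ≠ 0)
    (hd : 2*x₁*x₂ + 2*x₂*x₃ - c ≠ 0) :
    let x₁' := -x₁
    let x₂' := x₂ + 2*c*x₂ / (2*x₁*x₂ + 2*x₂*x₃ - c)
    let x₃' := x₃ - c/(2*x₂)
    let I : K → K → K → K := fun a b d => (a + d) * (2*b*(a - d) + c) / a
    x₁'^2 = x₁^2 ∧ I x₁' x₂' x₃' = -I x₁ x₂ x₃ := by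
  refine ⟨by ring, ?_⟩
  have hD : x₁ * x₂ ^ 2 * c * 4 + (-(x₁ * x₂ ^ 3 * x₃ * 8) - x₁ ^ 2 * x₂ ^ 3 * 8) ≠ 0 := by
    have : x₁ * x₂ ^ 2 * c * 4 + (-(x₁ * x₂ ^ 3 * x₃ * 8) - x₁ ^ 2 * x₂ ^ 3 * 8)
        = (-(2*2)) * (x₁ * x₂ ^ 2) * (2*x₁*x₂ + 2*x₂*x₃ - c) := by ring
    rw [this]
    exact mul_ne_zero (mul_ne_zero (neg_ne_zero.mpr (mul_ne_zero hchar hchar))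
      (mul_ne_zero h1 (pow_ne_zero _ h2))) hd
  field_simp [hD]
  have hd' : 2 * x₂ * (x₁ + x₃) - c ≠ 0 := by
    intro h; apply hd; linear_combination h
  field_simp
  ring
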